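/- arXiv:math/0312466 — 12 statements merged into one kernel-verified Lean document; each statement's English description precedes it below -/
import Mathlib

section
/- For all p, q, r ∈ Q, θ(p, q)·θ(p.q, r) = (p ▷ θ(q, r))·θ(p ◁ θ(q, r), q.r), where the products on both sides are taken in F. -/
theorem stmt5 {G : Type*} [Group G] [Fintype G] (F : Subgroup G) (Q : Set G)
    (h1 : (1 : G) ∈ Q)
    (hL : ∀ g : G, ∃! xq : F × Q, (xq.1 : G) * (xq.2 : G) = g)
    (hR : ∀ g : G, ∃! py : Q × F, (py.1 : G) * (py.2 : G) = g)
    (actF : Q → F → F) (actQ : Q → F → Q)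
    (hact : ∀ (q : Q) (x : F), (q : G) * (x : G) = (actF q x : G) * ((actQ q x : Q) : G))
    (mulQ : Q → Q → Q) (θ : Q → Q → F)
    (hθ : ∀ p q : Q, (p : G) * (q : G) = ((θ p q : F) : G) * ((mulQ p q : Q) : G)) :
    ∀ p q r : Q, θ p q * θ (mulQ p q) r = actF p (θ q r) * θ (actQ p (θ q r)) (mulQ q r) := by
  intro p q r
  have ha : ((θ p q * θ (mulQ p q) r : F) : G) * ((mulQ (mulQ p q) r : Q) : G)
      = (p : G) * (q : G) * (r : G) := by
    push_cast
    rw [mul_assoc, ← hθ (mulQ p q) r, ← mul_assoc, ← hθ p q]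
  have hb : ((actF p (θ q r) * θ (actQ p (θ q r)) (mulQ q r) : F) : G)
      * ((mulQ (actQ p (θ q r)) (mulQ q r) : Q) : G) = (p : G) * (q : G) * (r : G) := by
    push_cast
    rw [mul_assoc, ← hθ (actQ p (θ q r)) (mulQ q r), ← mul_assoc, ← hact p (θ q r),
      mul_assoc, ← hθ q r, mul_assoc]
  obtain ⟨xq, -, huniq⟩ := hL ((p : G) * (q : G) * (r : G))
  have h1' := huniq (θ p q * θ (mulQ p q) r, mulQ (mulQ p q) r) ha
  have h2' := huniq (actF p (θ q r) * θ (actQ p (θ q r)) (mulQ q r),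
    mulQ (actQ p (θ q r)) (mulQ q r)) hb
  have := h1'.trans h2'.symm
  exact congrArg Prod.fst this
end

section
/- For all p, q, r ∈ Q, (p ◁ θ(q, r)).(q.r) = (p.q).r. -/
theorem stmt6 {G : Type*} [Group G] [Fintype G] (F : Subgroup G) (Q : Set G)
    (h1 : (1 : G) ∈ Q)
    (hL : ∀ g : G, ∃! xq : F × Q, (xq.1 : G) * (xq.2 : G) = g)
    (hR : ∀ g : G, ∃! py : Q × F, (py.1 : G) * (py.2 : G) = g)
    (actF : Q → F → F) (actQ : Q → F → Q)
    (hact : ∀ (q : Q) (x : F), (q : G) * (x : G) = (actF q x : G) * ((actQ q x : Q) : G))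
    (mulQ : Q → Q → Q) (θ : Q → Q → F)
    (hθ : ∀ p q : Q, (p : G) * (q : G) = ((θ p q : F) : G) * ((mulQ p q : Q) : G)) :
    ∀ p q r : Q, mulQ (actQ p (θ q r)) (mulQ q r) = mulQ (mulQ p q) r := by
  intro p q r
  obtain ⟨w, hw, huniq⟩ := hL ((p : G) * q * r)
  have e1 : (((θ p q * θ (mulQ p q) r : F) : G)) * ((mulQ (mulQ p q) r : Q) : G)
      = (p : G) * q * r := by
    push_cast
    rw [mul_assoc, ← hθ (mulQ p q) r, ← mul_assoc, ← hθ p q]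
  have e2 : (((actF p (θ q r) * θ (actQ p (θ q r)) (mulQ q r) : F) : G))
      * ((mulQ (actQ p (θ q r)) (mulQ q r) : Q) : G) = (p : G) * q * r := by
    push_cast
    rw [mul_assoc, ← hθ, ← mul_assoc, ← hact, mul_assoc, ← hθ, ← mul_assoc]
  have h := (huniq (_, mulQ (actQ p (θ q r)) (mulQ q r)) e2).trans (huniq (_, mulQ (mulQ p q) r) e1).symm
  exact congrArg Prod.snd h
end

section
/- For every p ∈ Q there exist unique elements p^L, p^R ∈ Q such that p^L . p = e and p . p^R = e, where . is the induced multiplication on Q. -/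
theorem stmt9 {G : Type*} [Group G] [Fintype G] (F : Subgroup G) (Q : Set G)
    (h1 : (1 : G) ∈ Q)
    (hL : ∀ g : G, ∃! xq : F × Q, (xq.1 : G) * (xq.2 : G) = g)
    (hR : ∀ g : G, ∃! py : Q × F, (py.1 : G) * (py.2 : G) = g)
    (actF : Q → F → F) (actQ : Q → F → Q)
    (hact : ∀ (q : Q) (x : F), (q : G) * (x : G) = (actF q x : G) * ((actQ q x : Q) : G))
    (mulQ : Q → Q → Q) (θ : Q → Q → F)
    (hθ : ∀ p q : Q, (p : G) * (q : G) = ((θ p q : F) : G) * ((mulQ p q : Q) : G)) :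
    ∀ p : Q, (∃! l : Q, mulQ l p = ⟨1, h1⟩) ∧ (∃! r : Q, mulQ p r = ⟨1, h1⟩) := by
  have decL : ∀ (x1 x2 : F) (q1 q2 : Q),
      (x1 : G) * (q1 : G) = (x2 : G) * (q2 : G) → x1 = x2 ∧ q1 = q2 := by
    intro x1 x2 q1 q2 h
    obtain ⟨z, _, hu⟩ := hL ((x1 : G) * (q1 : G))
    have e1 := hu (x1, q1) rfl
    have e2 := hu (x2, q2) h.symm
    have e3 : (x1, q1) = ((x2, q2) : F × Q) := e1.trans e2.symm
    exact ⟨congrArg Prod.fst e3, congrArg Prod.snd e3⟩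
  have decR : ∀ (q1 q2 : Q) (y1 y2 : F),
      (q1 : G) * (y1 : G) = (q2 : G) * (y2 : G) → q1 = q2 ∧ y1 = y2 := by
    intro q1 q2 y1 y2 h
    obtain ⟨z, _, hu⟩ := hR ((q1 : G) * (y1 : G))
    have e1 := hu (q1, y1) rfl
    have e2 := hu (q2, y2) h.symm
    have e3 : (q1, y1) = ((q2, y2) : Q × F) := e1.trans e2.symm
    exact ⟨congrArg Prod.fst e3, congrArg Prod.snd e3⟩
  intro p
  constructor
  · -- left inverse
    obtain ⟨⟨x, q⟩, hxq, _⟩ := hL ((p : G)⁻¹)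
    have key : (q : G) * (p : G) = ((x⁻¹ : F) : G) := by
      have h' : (x : G) * ((q : G) * (p : G)) = 1 := by
        rw [← mul_assoc, hxq, inv_mul_cancel]
      have := inv_eq_of_mul_eq_one_right h'
      simpa using this.symm
    refine ⟨q, ?_, ?_⟩
    · have hd : ((θ q p : F) : G) * ((mulQ q p : Q) : G)
          = ((x⁻¹ : F) : G) * (((⟨1, h1⟩ : Q) : G)) := by
        rw [← hθ q p, key]; simp
      exact (decL _ _ _ _ hd).2
    · intro l hl
      have hlp : (l : G) * (p : G) = ((θ l p : F) : G) := by
        rw [hθ l p, hl]; simp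
      have hd : (((θ l p)⁻¹ : F) : G) * (l : G) = (x : G) * (q : G) := by
        rw [hxq]
        have : (l : G) = ((θ l p : F) : G) * (p : G)⁻¹ := by
          rw [← hlp]; group
        rw [this]; push_cast; group
      exact (decL _ _ _ _ hd).2
  · -- right inverse
    obtain ⟨⟨q, y⟩, hqy, _⟩ := hR ((p : G)⁻¹)
    have key : (p : G) * (q : G) = ((y⁻¹ : F) : G) := by
      have h' : ((p : G) * (q : G)) * (y : G) = 1 := by
        rw [mul_assoc, hqy, mul_inv_cancel]
      have := inv_eq_of_mul_eq_one_left h'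
      simpa using this.symm
    refine ⟨q, ?_, ?_⟩
    · have hd : ((θ p q : F) : G) * ((mulQ p q : Q) : G)
          = ((y⁻¹ : F) : G) * (((⟨1, h1⟩ : Q) : G)) := by
        rw [← hθ p q, key]; simp
      exact (decL _ _ _ _ hd).2
    · intro r hr
      have hpr : (p : G) * (r : G) = ((θ p r : F) : G) := by
        rw [hθ p r, hr]; simp
      have hd : (r : G) * (((θ p r)⁻¹ : F) : G) = (q : G) * (y : G) := by
        rw [hqy]
        have : (r : G) = (p : G)⁻¹ * ((θ p r : F) : G) := by
          rw [← hpr]; group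
        rw [this]; push_cast; group
      exact (decR _ _ _ _ hd).1
end

section
/- For every p ∈ Q, p^L ◁ θ(p, p^R) = p^R and p^L ▷ θ(p, p^R) = θ(p^L, p). -/
theorem stmt11 {G : Type*} [Group G] [Fintype G] (F : Subgroup G) (Q : Set G)
    (h1 : (1 : G) ∈ Q)
    (hL : ∀ g : G, ∃! xq : F × Q, (xq.1 : G) * (xq.2 : G) = g)
    (hR : ∀ g : G, ∃! py : Q × F, (py.1 : G) * (py.2 : G) = g)
    (actF : Q → F → F) (actQ : Q → F → Q)
    (hact : ∀ (q : Q) (x : F), (q : G) * (x : G) = (actF q x : G) * ((actQ q x : Q) : G))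
    (mulQ : Q → Q → Q) (θ : Q → Q → F)
    (hθ : ∀ p q : Q, (p : G) * (q : G) = ((θ p q : F) : G) * ((mulQ p q : Q) : G))
    (L R : Q → Q)
    (hLdef : ∀ p : Q, mulQ (L p) p = ⟨1, h1⟩)
    (hRdef : ∀ p : Q, mulQ p (R p) = ⟨1, h1⟩) :
    ∀ p : Q, actQ (L p) (θ p (R p)) = R p ∧ actF (L p) (θ p (R p)) = θ (L p) p := by
  intro p
  set g : G := (L p : G) * ((p : G) * (R p : G)) with hg
  have e1 : ((actF (L p) (θ p (R p)) : F) : G) * ((actQ (L p) (θ p (R p)) : Q) : G) = g := by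
    rw [← hact]
    have h := hθ p (R p)
    rw [hRdef p] at h
    simp only [hg, h]
    group
  have e2 : ((θ (L p) p : F) : G) * ((R p : Q) : G) = g := by
    have h := hθ (L p) p
    rw [hLdef p] at h
    simp only [hg, ← mul_assoc, h]
    group
  obtain ⟨xq, _, huniq⟩ := hL g
  have h12 : (actF (L p) (θ p (R p)), actQ (L p) (θ p (R p))) = (θ (L p) p, R p) :=
    (huniq _ e1).trans (huniq _ e2).symm
  exact ⟨congrArg Prod.snd h12, congrArg Prod.fst h12⟩
end

section
/- For every p ∈ Q, p^{LL} = p ◁ θ(p^L, p)⁻¹, where p^{LL} = (p^L)^L. -/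
theorem stmt12 {G : Type*} [Group G] [Fintype G] (F : Subgroup G) (Q : Set G)
    (h1 : (1 : G) ∈ Q)
    (hL : ∀ g : G, ∃! xq : F × Q, (xq.1 : G) * (xq.2 : G) = g)
    (hR : ∀ g : G, ∃! py : Q × F, (py.1 : G) * (py.2 : G) = g)
    (actF : Q → F → F) (actQ : Q → F → Q)
    (hact : ∀ (q : Q) (x : F), (q : G) * (x : G) = (actF q x : G) * ((actQ q x : Q) : G))
    (mulQ : Q → Q → Q) (θ : Q → Q → F)
    (hθ : ∀ p q : Q, (p : G) * (q : G) = ((θ p q : F) : G) * ((mulQ p q : Q) : G))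
    (L R : Q → Q)
    (hLdef : ∀ p : Q, mulQ (L p) p = ⟨1, h1⟩)
    (hRdef : ∀ p : Q, mulQ p (R p) = ⟨1, h1⟩) :
    ∀ p : Q, L (L p) = actQ p (θ (L p) p)⁻¹ := by
  intro p
  obtain ⟨xq, _, huniq⟩ := hL ((L p : G))⁻¹
  -- θ (L p) p = L p * p
  have ht1 : ((θ (L p) p : F) : G) = (L p : G) * (p : G) := by
    have := hθ (L p) p
    rw [hLdef p] at this
    simpa using this.symm
  have ht2 : ((θ (L (L p)) (L p) : F) : G) = (L (L p) : G) * (L p : G) := by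
    have := hθ (L (L p)) (L p)
    rw [hLdef (L p)] at this
    simpa using this.symm
  have e1 : (((θ (L (L p)) (L p))⁻¹ : F) : G) * ((L (L p) : Q) : G) = ((L p : G))⁻¹ := by
    push_cast
    rw [ht2]
    group
  have e2 : ((actF p (θ (L p) p)⁻¹ : F) : G) * ((actQ p (θ (L p) p)⁻¹ : Q) : G)
      = ((L p : G))⁻¹ := by
    rw [← hact]
    push_cast
    rw [ht1]
    group
  have h1' := huniq ((θ (L (L p)) (L p))⁻¹, L (L p)) e1
  have h2' := huniq (actF p (θ (L p) p)⁻¹, actQ p (θ (L p) p)⁻¹) e2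
  have := h1'.trans h2'.symm
  exact congrArg Prod.snd this
end

section
/- For every p ∈ Q and x ∈ F, (p ◁ x)^L = p^L ◁ (p ▷ x). -/
theorem stmt13 {G : Type*} [Group G] [Fintype G] (F : Subgroup G) (Q : Set G)
    (h1 : (1 : G) ∈ Q)
    (hL : ∀ g : G, ∃! xq : F × Q, (xq.1 : G) * (xq.2 : G) = g)
    (hR : ∀ g : G, ∃! py : Q × F, (py.1 : G) * (py.2 : G) = g)
    (actF : Q → F → F) (actQ : Q → F → Q)
    (hact : ∀ (q : Q) (x : F), (q : G) * (x : G) = (actF q x : G) * ((actQ q x : Q) : G))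
    (mulQ : Q → Q → Q) (θ : Q → Q → F)
    (hθ : ∀ p q : Q, (p : G) * (q : G) = ((θ p q : F) : G) * ((mulQ p q : Q) : G))
    (L R : Q → Q)
    (hLdef : ∀ p : Q, mulQ (L p) p = ⟨1, h1⟩)
    (hRdef : ∀ p : Q, mulQ p (R p) = ⟨1, h1⟩) :
    ∀ (p : Q) (x : F), L (actQ p x) = actQ (L p) (actF p x) := by
  -- uniqueness of left inverses in Q
  have leftUnique : ∀ u v q : Q, mulQ u q = ⟨1, h1⟩ → mulQ v q = ⟨1, h1⟩ → u = v := by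
    intro u v q hu hv
    have huG : (u : G) * (q : G) = (θ u q : G) := by
      have := hθ u q; rw [hu] at this; simpa using this
    have hvG : (v : G) * (q : G) = (θ v q : G) := by
      have := hθ v q; rw [hv] at this; simpa using this
    have key : ((θ v q * (θ u q)⁻¹ : F) : G) * (u : G) = (v : G) := by
      push_cast
      have : (u : G) = (θ u q : G) * (q : G)⁻¹ := by
        rw [← huG]; group
      have hv' : (v : G) = (θ v q : G) * (q : G)⁻¹ := by
        rw [← hvG]; group
      rw [this, hv']; group
    obtain ⟨w, hw, hwu⟩ := hL (v : G)
    have e1 := hwu (⟨θ v q * (θ u q)⁻¹, u⟩ : F × Q) key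
    have e2 := hwu (⟨1, v⟩ : F × Q) (by simp)
    have := e1.trans e2.symm
    exact congrArg Prod.snd this
  intro p x
  set m := L p with hm
  set a := actF p x with ha
  set q := actQ p x with hq
  set r := actQ m a with hr
  set b := actF m a with hb
  -- show mulQ r q = 1
  have hmp : (m : G) * (p : G) = (θ m p : G) := by
    have := hθ m p; rw [hLdef p] at this; simpa using this
  have hcalc : (b : G) * ((r : G) * (q : G)) = (θ m p : G) * (x : G) := by
    have h2 : (p : G) * (x : G) = (a : G) * (q : G) := hact p x
    have h1' : (m : G) * (a : G) = (b : G) * (r : G) := hact m a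
    calc (b : G) * ((r : G) * (q : G)) = ((m : G) * (a : G)) * (q : G) := by
            rw [h1']; group
      _ = (m : G) * ((p : G) * (x : G)) := by rw [h2]; group
      _ = ((m : G) * (p : G)) * (x : G) := by group
      _ = (θ m p : G) * (x : G) := by rw [hmp]
  have hmrq : ((mulQ r q : Q) : G)
      = (((θ r q)⁻¹ * b⁻¹ * θ m p * x : F) : G) := by
    have := hθ r q
    push_cast
    have hb' : (b : G) * ((θ r q : G) * ((mulQ r q : Q) : G)) = (θ m p : G) * (x : G) := by
      rw [← this]; exact hcalc
    have : ((mulQ r q : Q) : G) = (θ r q : G)⁻¹ * ((b : G)⁻¹ * ((θ m p : G) * (x : G))) := by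
      rw [← hb']; group
    rw [this]; group
  have hrq1 : mulQ r q = ⟨1, h1⟩ := by
    obtain ⟨w, hw, hwu⟩ := hL ((mulQ r q : Q) : G)
    have e1 := hwu (⟨(θ r q)⁻¹ * b⁻¹ * θ m p * x, ⟨1, h1⟩⟩ : F × Q)
      (by simpa using hmrq.symm)
    have e2 := hwu (⟨1, mulQ r q⟩ : F × Q) (by simp)
    have := congrArg Prod.snd (e1.trans e2.symm)
    simpa using this.symm
  exact leftUnique (L q) r q (hLdef q) hrq1
end

section
/- Define p ≻ x = θ(p, p^R)⁻¹ · (p ▷ x) · θ(p ◁ x, (p ◁ x)^R) for p ∈ Q, x ∈ F. Then p ≻ (p^R ▷ x) = x and p^R ▷ (p ≻ x) = x for all p ∈ Q, x ∈ F; in particular the map x ↦ p ≻ x is a bijection of F with inverse x ↦ p^R ▷ x. -/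
theorem stmt14 {G : Type*} [Group G] [Fintype G] (F : Subgroup G) (Q : Set G)
    (h1 : (1 : G) ∈ Q)
    (hL : ∀ g : G, ∃! xq : F × Q, (xq.1 : G) * (xq.2 : G) = g)
    (hR : ∀ g : G, ∃! py : Q × F, (py.1 : G) * (py.2 : G) = g)
    (actF : Q → F → F) (actQ : Q → F → Q)
    (hact : ∀ (q : Q) (x : F), (q : G) * (x : G) = (actF q x : G) * ((actQ q x : Q) : G))
    (mulQ : Q → Q → Q) (θ : Q → Q → F)
    (hθ : ∀ p q : Q, (p : G) * (q : G) = ((θ p q : F) : G) * ((mulQ p q : Q) : G))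
    (L R : Q → Q)
    (hLdef : ∀ p : Q, mulQ (L p) p = ⟨1, h1⟩)
    (hRdef : ∀ p : Q, mulQ p (R p) = ⟨1, h1⟩)
    (succ : Q → F → F)
    (hsucc : ∀ (p : Q) (x : F),
      succ p x = (θ p (R p))⁻¹ * actF p x * θ (actQ p x) (R (actQ p x))) :
    (∀ (p : Q) (x : F), succ p (actF (R p) x) = x ∧ actF (R p) (succ p x) = x) ∧
    (∀ p : Q, Function.Bijective (succ p)) := by
  have hone : ((⟨1, h1⟩ : Q) : G) = 1 := rfl
  have hsR : ∀ s : Q, (s : G) * (R s : G) = ((θ s (R s) : F) : G) := by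
    intro s
    rw [hθ, hRdef, hone, mul_one]
  -- uniqueness of the right inverse in Q
  have key : ∀ (s a : Q), (s : G) * (a : G) ∈ F → a = R s := by
    intro s a h
    have h2 : (s : G) * (R s : G) ∈ F := (hsR s) ▸ (θ s (R s)).2
    obtain ⟨py, hpy, huniq⟩ := hR ((s : G)⁻¹)
    have e1 : ((a, (⟨((s : G) * a)⁻¹, inv_mem h⟩ : F)) : Q × F) = py := by
      apply huniq
      simp [mul_inv_rev, ← mul_assoc]
    have e2 : ((R s, (⟨((s : G) * (R s : G))⁻¹, inv_mem h2⟩ : F)) : Q × F) = py := by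
      apply huniq
      simp [mul_inv_rev, ← mul_assoc]
    exact congrArg Prod.fst (e1.trans e2.symm)
  have main : ∀ (p : Q) (x : F), succ p (actF (R p) x) = x ∧ actF (R p) (succ p x) = x := by
    intro p x
    constructor
    · set y := actF (R p) x with hy
      set q' := actQ (R p) x with hq'
      set s := actQ p y with hs
      have h1' : (R p : G) * (x : G) = (y : G) * (q' : G) := hact (R p) x
      have h2' : (p : G) * (y : G) = (actF p y : G) * (s : G) := hact p y
      have hSeq : (s : G) = (actF p y : G)⁻¹ * ((p : G) * (y : G)) :=
        eq_inv_mul_iff_mul_eq.mpr h2'.symm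
      have hmem : (s : G) * (q' : G) ∈ F := by
        have hcalc : (s : G) * (q' : G)
            = (actF p y : G)⁻¹ * ((θ p (R p) : F) : G) * (x : G) := by
          rw [hSeq, ← hsR p]
          calc (actF p y : G)⁻¹ * ((p : G) * (y : G)) * (q' : G)
              = (actF p y : G)⁻¹ * (p : G) * ((y : G) * (q' : G)) := by group
            _ = (actF p y : G)⁻¹ * (p : G) * ((R p : G) * (x : G)) := by rw [← h1']
            _ = (actF p y : G)⁻¹ * ((p : G) * (R p : G)) * (x : G) := by group
        rw [hcalc]
        exact mul_mem (mul_mem (inv_mem (actF p y).2) (θ p (R p)).2) x.2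
      have hq'R : q' = R s := key s q' hmem
      apply Subtype.ext
      rw [hsucc]
      push_cast
      have hB : (actF p y : G) = (p : G) * (y : G) * (s : G)⁻¹ :=
        eq_mul_inv_iff_mul_eq.mpr h2'.symm
      rw [← hsR p, ← hsR s, ← hq'R, hB]
      calc ((p : G) * (R p : G))⁻¹ * ((p : G) * (y : G) * (s : G)⁻¹) * ((s : G) * (q' : G))
          = (R p : G)⁻¹ * ((y : G) * (q' : G)) := by group
        _ = (R p : G)⁻¹ * ((R p : G) * (x : G)) := by rw [← h1']
        _ = (x : G) := by group
    · set u := succ p x with hu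
      set q := actQ p x with hq
      have h2' : (p : G) * (x : G) = (actF p x : G) * (q : G) := hact p x
      have hB : (actF p x : G) = (p : G) * (x : G) * (q : G)⁻¹ :=
        eq_mul_inv_iff_mul_eq.mpr h2'.symm
      have hU : (u : G) = ((θ p (R p) : F) : G)⁻¹ * (actF p x : G) * ((θ q (R q) : F) : G) := by
        rw [hu, hsucc]
        push_cast
        rfl
      have hRu : (R p : G) * (u : G) = (x : G) * (R q : G) := by
        rw [hU, hB, ← hsR p, ← hsR q]
        group
      obtain ⟨xq, hxq, huniq⟩ := hL ((x : G) * (R q : G))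
      have e1 : ((x, R q) : F × Q) = xq := huniq _ rfl
      have e2 : ((actF (R p) u, actQ (R p) u) : F × Q) = xq := by
        apply huniq
        show (actF (R p) u : G) * (actQ (R p) u : G) = _
        rw [← hact, hRu]
      exact congrArg Prod.fst (e2.trans e1.symm)
  refine ⟨main, fun p => Function.bijective_iff_has_inverse.mpr
    ⟨actF (R p), fun x => (main p x).2, fun x => (main p x).1⟩⟩
end

section
/- For all p ∈ Q and x ∈ F, (p ◁ x)^R ◁ (p ≻ x)⁻¹ = p^R, where p ≻ x = θ(p, p^R)⁻¹ · (p ▷ x) · θ(p ◁ x, (p ◁ x)^R). -/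
theorem stmt15 {G : Type*} [Group G] [Fintype G] (F : Subgroup G) (Q : Set G)
    (h1 : (1 : G) ∈ Q)
    (hL : ∀ g : G, ∃! xq : F × Q, (xq.1 : G) * (xq.2 : G) = g)
    (hR : ∀ g : G, ∃! py : Q × F, (py.1 : G) * (py.2 : G) = g)
    (actF : Q → F → F) (actQ : Q → F → Q)
    (hact : ∀ (q : Q) (x : F), (q : G) * (x : G) = (actF q x : G) * ((actQ q x : Q) : G))
    (mulQ : Q → Q → Q) (θ : Q → Q → F)
    (hθ : ∀ p q : Q, (p : G) * (q : G) = ((θ p q : F) : G) * ((mulQ p q : Q) : G))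
    (L R : Q → Q)
    (hLdef : ∀ p : Q, mulQ (L p) p = ⟨1, h1⟩)
    (hRdef : ∀ p : Q, mulQ p (R p) = ⟨1, h1⟩)
    (succ : Q → F → F)
    (hsucc : ∀ (p : Q) (x : F),
      succ p x = (θ p (R p))⁻¹ * actF p x * θ (actQ p x) (R (actQ p x))) :
    ∀ (p : Q) (x : F), actQ (R (actQ p x)) (succ p x)⁻¹ = R p := by
  intro p x
  have hRp : ((θ p (R p) : F) : G) = (p : G) * ((R p : Q) : G) := by
    have h := hθ p (R p)
    rw [hRdef] at h
    simpa using h.symm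
  have hRq : ((θ (actQ p x) (R (actQ p x)) : F) : G)
      = ((actQ p x : Q) : G) * ((R (actQ p x) : Q) : G) := by
    have h := hθ (actQ p x) (R (actQ p x))
    rw [hRdef] at h
    simpa using h.symm
  have key : ((R (actQ p x) : Q) : G) * (((succ p x)⁻¹ : F) : G)
      = ((x⁻¹ : F) : G) * ((R p : Q) : G) := by
    have hs : ((succ p x : F) : G)
        = ((θ p (R p) : F) : G)⁻¹ * ((actF p x : F) : G)
          * ((θ (actQ p x) (R (actQ p x)) : F) : G) := by
      rw [hsucc]; push_cast; ring_nf
    have hpx := hact p x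
    push_cast
    rw [hs, hRp, hRq]
    have : ((actF p x : F) : G) = (p : G) * (x : G) * (((actQ p x : Q) : G))⁻¹ := by
      rw [hpx]; group
    rw [this]
    group
  obtain ⟨pr, hpr, hu⟩ := hL (((x⁻¹ : F) : G) * ((R p : Q) : G))
  have h1' : (x⁻¹, R p) = pr := hu _ rfl
  have h2' : (actF (R (actQ p x)) (succ p x)⁻¹, actQ (R (actQ p x)) (succ p x)⁻¹) = pr := by
    apply hu
    simp only
    rw [← hact]
    exact key
  have := h1'.trans h2'.symm
  exact (congrArg Prod.snd this).symm
end

section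
/- For all p ∈ Q and x, y ∈ F, p ≻ (xy) = (p ≻ x)·((p ◁ x) ≻ y), where p ≻ x = θ(p, p^R)⁻¹ · (p ▷ x) · θ(p ◁ x, (p ◁ x)^R). -/
theorem stmt16 {G : Type*} [Group G] [Fintype G] (F : Subgroup G) (Q : Set G)
    (h1 : (1 : G) ∈ Q)
    (hL : ∀ g : G, ∃! xq : F × Q, (xq.1 : G) * (xq.2 : G) = g)
    (hR : ∀ g : G, ∃! py : Q × F, (py.1 : G) * (py.2 : G) = g)
    (actF : Q → F → F) (actQ : Q → F → Q)
    (hact : ∀ (q : Q) (x : F), (q : G) * (x : G) = (actF q x : G) * ((actQ q x : Q) : G))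
    (mulQ : Q → Q → Q) (θ : Q → Q → F)
    (hθ : ∀ p q : Q, (p : G) * (q : G) = ((θ p q : F) : G) * ((mulQ p q : Q) : G))
    (L R : Q → Q)
    (hLdef : ∀ p : Q, mulQ (L p) p = ⟨1, h1⟩)
    (hRdef : ∀ p : Q, mulQ p (R p) = ⟨1, h1⟩)
    (succ : Q → F → F)
    (hsucc : ∀ (p : Q) (x : F),
      succ p x = (θ p (R p))⁻¹ * actF p x * θ (actQ p x) (R (actQ p x))) :
    ∀ (p : Q) (x y : F), succ p (x * y) = succ p x * succ (actQ p x) y := by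
  intro p x y
  have key : (actF p (x * y), actQ p (x * y))
      = (actF p x * actF (actQ p x) y, actQ (actQ p x) y) := by
    apply (hL ((p : G) * ((x * y : F) : G))).unique
    · exact (hact p (x * y)).symm
    · show ((actF p x : G) * (actF (actQ p x) y : G)) * (actQ (actQ p x) y : G) = _
      push_cast
      rw [mul_assoc, ← hact (actQ p x) y, ← mul_assoc, ← hact p x, mul_assoc]
  have h1' : actF p (x * y) = actF p x * actF (actQ p x) y := congrArg Prod.fst key
  have h2' : actQ p (x * y) = actQ (actQ p x) y := congrArg Prod.snd key
  rw [hsucc, hsucc, hsucc, h1', h2']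
  group
end

section
/- For every p ∈ Q, p ≻ θ(p^L, p)⁻¹ = θ(p, p^R)⁻¹, where p ≻ x = θ(p, p^R)⁻¹ · (p ▷ x) · θ(p ◁ x, (p ◁ x)^R). -/
theorem stmt17 {G : Type*} [Group G] [Fintype G] (F : Subgroup G) (Q : Set G)
    (h1 : (1 : G) ∈ Q)
    (hL : ∀ g : G, ∃! xq : F × Q, (xq.1 : G) * (xq.2 : G) = g)
    (hR : ∀ g : G, ∃! py : Q × F, (py.1 : G) * (py.2 : G) = g)
    (actF : Q → F → F) (actQ : Q → F → Q)
    (hact : ∀ (q : Q) (x : F), (q : G) * (x : G) = (actF q x : G) * ((actQ q x : Q) : G))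
    (mulQ : Q → Q → Q) (θ : Q → Q → F)
    (hθ : ∀ p q : Q, (p : G) * (q : G) = ((θ p q : F) : G) * ((mulQ p q : Q) : G))
    (L R : Q → Q)
    (hLdef : ∀ p : Q, mulQ (L p) p = ⟨1, h1⟩)
    (hRdef : ∀ p : Q, mulQ p (R p) = ⟨1, h1⟩)
    (succ : Q → F → F)
    (hsucc : ∀ (p : Q) (x : F),
      succ p x = (θ p (R p))⁻¹ * actF p x * θ (actQ p x) (R (actQ p x))) :
    ∀ p : Q, succ p (θ (L p) p)⁻¹ = (θ p (R p))⁻¹ := by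
  intro p
  set x : F := (θ (L p) p)⁻¹ with hx
  set q : Q := actQ p x with hq
  set a : F := actF p x with ha
  have hθLp : ((θ (L p) p : F) : G) = (L p : G) * (p : G) := by
    have h := hθ (L p) p
    rw [hLdef] at h
    simpa using h.symm
  have h2 : (a : G) * (q : G) = ((L p : G))⁻¹ := by
    have h := hact p x
    rw [← h, hx]
    push_cast
    rw [hθLp]
    group
  have h3 : (q : G) * ((R q : Q) : G) = ((θ q (R q) : F) : G) := by
    have h := hθ q (R q)
    rw [hRdef] at h
    simpa using h
  have h4 : ((R q : Q) : G) * (((θ q (R q))⁻¹ : F) : G) = (q : G)⁻¹ := by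
    push_cast
    rw [← h3]
    group
  have h5 : ((L p : Q) : G) * ((a : F) : G) = (q : G)⁻¹ := by
    have : (a : G) = ((L p : G))⁻¹ * ((q : G))⁻¹ := by
      rw [← h2]; group
    rw [this]; group
  obtain ⟨pf, _, huniq⟩ := hR ((q : G)⁻¹)
  have e1 := huniq (R q, (θ q (R q))⁻¹) h4
  have e2 := huniq (L p, a) h5
  have e4 : (θ q (R q))⁻¹ = a := congrArg Prod.snd (e1.trans e2.symm)
  rw [hsucc, ← ha, ← hq, ← e4]
  group
end

section
/- Let ω : G × G × G → kˣ be a normalized 3-cocycle (k a field) whose restriction to F × F × F is trivial. Then there exists a normalized 2-cochain η : G × G → kˣ with η|_{F×F} = 1 such that ω·(dη) restricted to F × G × G is identically 1 and ω·(dη) restricted to F × F × Q is identically 1. -/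
/-- Auxiliary: combining a cocycle identity with the pure cancellation of a coboundary. -/
lemma stmt18_aux {k : Type*} [Field k]
    (w1 w2 w3 w4 w5 m1 m2 m3 m4 m5 m6 m7 m8 m9 m10 : kˣ)
    (h : w1 * w2 = w3 * w4 * w5) :
    w1 * (m1 * m2 * m3⁻¹ * m4⁻¹) * (w2 * (m4 * m5 * m6⁻¹ * m7⁻¹)) =
      w3 * (m2 * m5 * m8⁻¹ * m9⁻¹) * (w4 * (m1 * m9 * m10⁻¹ * m7⁻¹)) *
        (w5 * (m10 * m8 * m3⁻¹ * m6⁻¹)) := by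
  rw [Units.ext_iff] at h ⊢
  push_cast at h ⊢
  field_simp
  linear_combination h

/-- Auxiliary: small rearrangement in `kˣ`. -/
lemma stmt18_aux2 {k : Type*} [Field k] (A B D E : kˣ)
    (h : A * B = D * E) :
    B * (A * 1 * (E)⁻¹ * (D)⁻¹) = 1 := by
  rw [Units.ext_iff] at h ⊢
  push_cast at h ⊢
  field_simp
  linear_combination h

/-- Auxiliary: the final rearrangement in `kˣ`. -/
lemma stmt18_aux3 {k : Type*} [Field k] (W A B C D X Y : kˣ)
    (hX : X = W * (A * B * C⁻¹ * D⁻¹)) :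
    W * (A * (X * Y)⁻¹ * B * (C * Y⁻¹)⁻¹ * D⁻¹) = 1 := by
  subst hX
  rw [Units.ext_iff]
  push_cast
  field_simp

theorem stmt18 {G : Type*} [Group G] [Fintype G] (F : Subgroup G) (Q : Set G)
    (h1 : (1 : G) ∈ Q)
    (hleft : ∀ g : G, ∃! q : G, q ∈ Q ∧ q * g⁻¹ ∈ F)
    (hright : ∀ g : G, ∃! q : G, q ∈ Q ∧ g⁻¹ * q ∈ F)
    {k : Type*} [Field k] (ω : G → G → G → kˣ)
    (hcoc : ∀ a b c d : G,
      ω (a * b) c d * ω a b (c * d) = ω a b c * ω a (b * c) d * ω b c d)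
    (hnorm : ∀ a b : G, ω 1 a b = 1 ∧ ω a 1 b = 1 ∧ ω a b 1 = 1)
    (htriv : ∀ x y z : F, ω (x : G) (y : G) (z : G) = 1) :
    ∃ η : G → G → kˣ, (∀ a : G, η 1 a = 1 ∧ η a 1 = 1) ∧
      (∀ x y : F, η (x : G) (y : G) = 1) ∧
      (∀ (x : F) (g h : G),
        ω (x : G) g h *
          (η ((x : G) * g) h * η (x : G) g * (η g h)⁻¹ * (η (x : G) (g * h))⁻¹) = 1) ∧
      (∀ (x y : F) (q : Q),
        ω (x : G) (y : G) (q : G) *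
          (η ((x : G) * (y : G)) (q : G) * η (x : G) (y : G) * (η (y : G) (q : G))⁻¹ *
            (η (x : G) ((y : G) * (q : G)))⁻¹) = 1) := by
  classical
  choose qq hq using hleft
  have hqmem : ∀ g : G, qq g * g⁻¹ ∈ F := fun g => (hq g).1.2
  have hqQ : ∀ g : G, qq g ∈ Q := fun g => (hq g).1.1
  have huniq : ∀ g y : G, y ∈ Q → y * g⁻¹ ∈ F → y = qq g := fun g y ha hb => (hq g).2 y ⟨ha, hb⟩
  have hq_one : qq 1 = 1 := (huniq 1 1 h1 (by simpa using F.one_mem)).symm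
  have hqF : ∀ x : G, x ∈ F → qq x = 1 := fun x hx =>
    (huniq x 1 h1 (by simpa using F.inv_mem hx)).symm
  have hqmul : ∀ x : G, x ∈ F → ∀ g : G, qq (x * g) = qq g := by
    intro x hx g
    refine (huniq (x * g) (qq g) (hqQ g) ?_).symm
    have : qq g * (x * g)⁻¹ = qq g * g⁻¹ * x⁻¹ := by group
    rw [this]
    exact F.mul_mem (hqmem g) (F.inv_mem hx)
  set φ : G → G := fun g => (qq g * g⁻¹)⁻¹ with hφdef
  have hφmem : ∀ g : G, φ g ∈ F := fun g => F.inv_mem (hqmem g)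
  have hφq : ∀ g : G, φ g * qq g = g := by intro g; simp only [hφdef]; group
  have hφ_one : φ 1 = 1 := by simp [hφdef, hq_one]
  have hφF : ∀ x : G, x ∈ F → φ x = x := by
    intro x hx; simp [hφdef, hqF x hx]
  have hφmul : ∀ x : G, x ∈ F → ∀ g : G, φ (x * g) = x * φ g := by
    intro x hx g
    simp only [hφdef, hqmul x hx g]
    group
  -- stage-1 cochain
  set μ : G → G → kˣ := fun a b => if a ∈ F then ω a (φ b) (qq b) else 1 with hμdef
  have hμ1l : ∀ b : G, μ 1 b = 1 := by
    intro b; simp [hμdef, F.one_mem, (hnorm _ _).1]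
  have hμ1r : ∀ a : G, μ a 1 = 1 := by
    intro a; simp [hμdef, hφ_one, hq_one, (hnorm _ _).2.2]
  have hμFF : ∀ x y : G, x ∈ F → y ∈ F → μ x y = 1 := by
    intro x y hx hy
    simp [hμdef, hx, hφF y hy, hqF y hy, (hnorm _ _).2.2]
  -- the stage-1 modified cocycle
  set ωA : G → G → G → kˣ := fun a b c =>
    ω a b c * (μ (a * b) c * μ a b * (μ b c)⁻¹ * (μ a (b * c))⁻¹) with hωAdef
  have hA1m : ∀ a b : G, ωA a 1 b = 1 := by
    intro a b
    simp [hωAdef, (hnorm a b).2.1, hμ1l, hμ1r]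
  -- ωA is a cocycle
  have hcocA : ∀ a b c d : G,
      ωA (a * b) c d * ωA a b (c * d) = ωA a b c * ωA a (b * c) d * ωA b c d := by
    intro a b c d
    simp only [hωAdef]
    rw [mul_assoc a b c, mul_assoc b c d]
    exact stmt18_aux _ _ _ _ _ _ _ _ _ _ _ _ _ _ _ (hcoc a b c d)
  -- ωA is trivial on F × F × G
  have hAFFG : ∀ x y g : G, x ∈ F → y ∈ F → ωA x y g = 1 := by
    intro x y g hx hy
    have h := hcoc x y (φ g) (qq g)
    rw [hφq g, htriv ⟨x, hx⟩ ⟨y, hy⟩ ⟨φ g, hφmem g⟩, one_mul] at h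
    simp only [hωAdef, hμdef, if_pos hx, if_pos hy, if_pos (F.mul_mem hx hy),
      hφF y hy, hqF y hy, hφmul y hy g, hqmul y hy g, (hnorm x y).2.2]
    exact stmt18_aux2 _ _ _ _ h
  -- the final cochain
  set η : G → G → kˣ := fun a b => μ a b * (ωA (φ a) (qq a) b)⁻¹ with hηdef
  have hmain : ∀ (x : F) (g h : G),
      ω (x : G) g h *
        (η ((x : G) * g) h * η (x : G) g * (η g h)⁻¹ * (η (x : G) (g * h))⁻¹) = 1 := by
    intro x g h
    have e1 : φ ((x : G) * g) = (x : G) * φ g := hφmul _ x.2 g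
    have e2 : qq ((x : G) * g) = qq g := hqmul _ x.2 g
    have e3 : ωA (φ (x : G)) (qq (x : G)) g = 1 := by rw [hφF _ x.2, hqF _ x.2, hA1m]
    have e4 : ωA (φ (x : G)) (qq (x : G)) (g * h) = 1 := by rw [hφF _ x.2, hqF _ x.2, hA1m]
    have hkey : ωA ((x : G) * φ g) (qq g) h = ωA (x : G) g h * ωA (φ g) (qq g) h := by
      have h5 := hcocA (x : G) (φ g) (qq g) h
      rw [hφq g, hAFFG _ _ _ x.2 (hφmem g), hAFFG _ _ _ x.2 (hφmem g), one_mul, mul_one] at h5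
      exact h5
    simp only [hηdef, e1, e2, e3, e4, inv_one, mul_one]
    rw [hkey]
    refine stmt18_aux3 _ _ _ _ _ _ _ ?_
    simp only [hωAdef]
  refine ⟨η, ?_, ?_, hmain, fun x y q => hmain x (y : G) (q : G)⟩
  · intro a
    have hA1 : ωA (φ a) (qq a) 1 = 1 := by
      simp [hωAdef, (hnorm _ _).2.2, hμ1r]
    constructor
    · simp only [hηdef, hμ1l, hφ_one, hq_one, hA1m, inv_one, mul_one]
    · simp only [hηdef, hμ1r, hA1, inv_one, mul_one]
  · intro x y
    have h1' : ωA (φ (x : G)) (qq (x : G)) (y : G) = 1 := by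
      rw [hφF _ x.2, hqF _ x.2, hA1m]
    simp only [hηdef, hμFF _ _ x.2 y.2, h1', inv_one, mul_one]
end

section
/- Suppose the normalized 3-cocycle ω : G³ → kˣ satisfies ω|_{F×G×G} = 1 and ω|_{G×F×Q} = 1. Then for all g, h ∈ G, x, y ∈ F, p, q ∈ Q: (i) ω(xp, g, h) = ω(p, g, h); (ii) ω(g, y, xp) = ω(g, y, x); (iii) ω(g, x, pq) = ω(g, x, θ(p,q)); (iv) ω(pq, g, h) = ω(p.q, g, h). -/
theorem stmt19 {G : Type*} [Group G] [Fintype G] (F : Subgroup G) (Q : Set G)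
    (h1 : (1 : G) ∈ Q)
    (hL : ∀ g : G, ∃! xq : F × Q, (xq.1 : G) * (xq.2 : G) = g)
    (hR : ∀ g : G, ∃! py : Q × F, (py.1 : G) * (py.2 : G) = g)
    (actF : Q → F → F) (actQ : Q → F → Q)
    (hact : ∀ (q : Q) (x : F), (q : G) * (x : G) = (actF q x : G) * ((actQ q x : Q) : G))
    (mulQ : Q → Q → Q) (θ : Q → Q → F)
    (hθ : ∀ p q : Q, (p : G) * (q : G) = ((θ p q : F) : G) * ((mulQ p q : Q) : G))
    {k : Type*} [Field k] (ω : G → G → G → kˣ)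
    (hcoc : ∀ a b c d : G,
      ω (a * b) c d * ω a b (c * d) = ω a b c * ω a (b * c) d * ω b c d)
    (hnorm : ∀ a b : G, ω 1 a b = 1 ∧ ω a 1 b = 1 ∧ ω a b 1 = 1)
    (hF : ∀ (x : F) (g h : G), ω (x : G) g h = 1)
    (hFQ : ∀ (g : G) (x : F) (q : Q), ω g (x : G) (q : G) = 1) :
    (∀ (x : F) (p : Q) (g h : G), ω ((x : G) * (p : G)) g h = ω (p : G) g h) ∧
    (∀ (g : G) (y x : F) (p : Q), ω g (y : G) ((x : G) * (p : G)) = ω g (y : G) (x : G)) ∧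
    (∀ (g : G) (x : F) (p q : Q),
      ω g (x : G) ((p : G) * (q : G)) = ω g (x : G) ((θ p q : F) : G)) ∧
    (∀ (p q : Q) (g h : G),
      ω ((p : G) * (q : G)) g h = ω ((mulQ p q : Q) : G) g h) := by
  have i : ∀ (x : F) (p : Q) (g h : G), ω ((x : G) * (p : G)) g h = ω (p : G) g h := by
    intro x p g h
    have := hcoc (x : G) (p : G) g h
    simpa [hF] using this
  refine ⟨i, ?_, ?_, ?_⟩
  · intro g y x p
    have hc := hcoc g (y : G) (x : G) (p : G)
    have e1 : ω (g * (y : G)) (x : G) (p : G) = 1 := hFQ _ x p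
    have e2 := hFQ g (y * x) p
    push_cast at e2
    have e3 : ω (y : G) (x : G) (p : G) = 1 := hF y _ _
    simpa [e1, e2, e3] using hc
  · intro g x p q
    rw [hθ p q]
    have hc := hcoc g (x : G) ((θ p q : F) : G) ((mulQ p q : Q) : G)
    have e1 : ω (g * (x : G)) ((θ p q : F) : G) ((mulQ p q : Q) : G) = 1 :=
      hFQ _ (θ p q) (mulQ p q)
    have e2 := hFQ g (x * θ p q) (mulQ p q)
    push_cast at e2
    have e3 : ω ((x : G)) ((θ p q : F) : G) ((mulQ p q : Q) : G) = 1 := hF x _ _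
    simpa [e1, e2, e3] using hc
  · intro p q g h
    rw [hθ p q]
    exact i (θ p q) (mulQ p q) g h
end
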